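/- Let F be a Schwartz function on ℍⁿ × ℝ and L a positive integer. There is a constant C, depending only on L, n and finitely many Schwartz seminorms of F, such that whenever |(z',u')| ≤ (1/(2γ))(1+|(z,u)|) and |r'| ≤ (1/2)(1+|r|), one has |F((z,u)∘(z',u')⁻¹, r−r') − F((z,u), r−r') − F((z,u)∘(z',u')⁻¹, r) + F((z,u), r)| ≤ C |(z',u')| (1+|(z,u)|)^{−(L+2n+2)} · |r'| (1+|r|)^{−(L+1)}. -/

import Mathlib

open MeasureTheory Complex SchwartzMap Filter
open scoped BigOperators ComplexConjugate FourierTransform ENNReal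

noncomputable section

/-- The underlying space of the Heisenberg group ℍⁿ ≅ ℂⁿ × ℝ. -/
abbrev H (n : ℕ) := (Fin n → ℂ) × ℝ

/-- Heisenberg group multiplication: (z,t)∘(z',t') = (z+z', t+t'+2 Im(z·conj z')). -/
def Hmul {n : ℕ} (x y : H n) : H n :=
  (x.1 + y.1, x.2 + y.2 + 2 * (∑ j, x.1 j * conj (y.1 j)).im)

/-- Heisenberg group inverse: (z,t)⁻¹ = (-z,-t). -/
def Hinv {n : ℕ} (x : H n) : H n := (-x.1, -x.2)

/-- Homogeneous norm |(z,t)| = (|z|² + |t|)^{1/2}. -/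
def Hnorm {n : ℕ} (x : H n) : ℝ := Real.sqrt ((∑ j, Complex.normSq (x.1 j)) + |x.2|)

/-- Convolution on ℍⁿ : (f∗g)(x) = ∫ f(x∘y⁻¹) g(y) dy. -/
def Hconv {n : ℕ} (f g : H n → ℝ) (x : H n) : ℝ := ∫ y, f (Hmul x (Hinv y)) * g y

/-- Partial convolution in the central variable: (f ∗₂ h)(z,u) = ∫ f(z,u−v) h(v) dv. -/
def conv2 {n : ℕ} (f : H n → ℝ) (h : ℝ → ℝ) (x : H n) : ℝ := ∫ v, f (x.1, x.2 - v) * h v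

/-- Ordinary convolution on ℝ. -/
def convR (h k : ℝ → ℝ) (x : ℝ) : ℝ := ∫ v, h (x - v) * k v

/-- Convolution on the direct product group ℍⁿ × ℝ. -/
def PConv {n : ℕ} (F G : H n × ℝ → ℝ) (p : H n × ℝ) : ℝ :=
  ∫ q : H n × ℝ, F (Hmul p.1 (Hinv q.1), p.2 - q.2) * G q

/-- The projection π : (πF)(z,u) = ∫ F((z,u−v),v) dv. -/
def piProj {n : ℕ} (F : H n × ℝ → ℝ) (x : H n) : ℝ := ∫ v, F ((x.1, x.2 - v), v)

/-- Nonisotropic dilation ψ_s(z,u) = s^{−2n−2} ψ(z/s, u/s²). -/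
def dil1 {n : ℕ} (ψ : H n → ℝ) (s : ℝ) (x : H n) : ℝ :=
  (s ^ (2 * n + 2))⁻¹ * ψ ((s : ℂ)⁻¹ • x.1, x.2 / s ^ 2)

/-- Dilation on ℝ: η_t(v) = t⁻¹ η(v/t). -/
def dil2 (η : ℝ → ℝ) (t : ℝ) (v : ℝ) : ℝ := t⁻¹ * η (v / t)

/-- All moments of a function on ℝ vanish. -/
def momentsVanishR (η : ℝ → ℝ) : Prop := ∀ γ : ℕ, ∫ v : ℝ, v ^ γ * η v = 0

/-- All moments of a function on ℍⁿ vanish. -/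
def momentsVanishH {n : ℕ} (ψ : H n → ℝ) : Prop :=
  ∀ (α β : Fin n → ℕ) (γ : ℕ),
    ∫ x : H n, (∏ j, ((x.1 j).re ^ α j * (x.1 j).im ^ β j)) * x.2 ^ γ * ψ x = 0

/-- A function on ℍⁿ is radial in the ℂⁿ-variable. -/
def HRadial {n : ℕ} (ψ : H n → ℝ) : Prop :=
  ∀ (z z' : Fin n → ℂ) (u : ℝ),
    (∑ j, Complex.normSq (z j)) = (∑ j, Complex.normSq (z' j)) → ψ (z, u) = ψ (z', u)

/-- The product moment conditions defining S_∞(ℍⁿ × ℝ). -/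
def SInf {n : ℕ} (F : H n × ℝ → ℝ) : Prop :=
  (∀ (α β : Fin n → ℕ) (γ : ℕ) (v : ℝ),
    ∫ x : H n, (∏ j, ((x.1 j).re ^ α j * (x.1 j).im ^ β j)) * x.2 ^ γ * F (x, v) = 0) ∧
  (∀ (γ : ℕ) (x : H n), ∫ v : ℝ, v ^ γ * F (x, v) = 0)

/-- The flag component function ψ_{s,t} = ψ^{(1)}_s ∗₂ ψ^{(2)}_t. -/
def psist {n : ℕ} (ψa : H n → ℝ) (ψb : ℝ → ℝ) (s t : ℝ) : H n → ℝ :=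
  conv2 (dil1 ψa s) (dil2 ψb t)

/-- The product kernel Ψ_{s,t}((z,u),r) = ψ^{(1)}_s(z,u) ψ^{(2)}_t(r) on ℍⁿ × ℝ. -/
def PsiST {n : ℕ} (ψa : H n → ℝ) (ψb : ℝ → ℝ) (s t : ℝ) : H n × ℝ → ℝ :=
  fun p => dil1 ψa s p.1 * dil2 ψb t p.2


section helperLemmas

lemma Hnorm_nonneg {n : ℕ} (x : H n) : 0 ≤ Hnorm x := Real.sqrt_nonneg _

lemma Hnorm_arg_nonneg {n : ℕ} (x : H n) : 0 ≤ (∑ j, Complex.normSq (x.1 j)) + |x.2| :=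
  add_nonneg (Finset.sum_nonneg fun j _ => Complex.normSq_nonneg _) (abs_nonneg _)

lemma Hnorm_sq {n : ℕ} (x : H n) : Hnorm x ^ 2 = (∑ j, Complex.normSq (x.1 j)) + |x.2| := by
  simpa [Hnorm] using Real.sq_sqrt (Hnorm_arg_nonneg x)

lemma hmul_sub {n : ℕ} (x x' : H n) :
    Hmul x (Hinv x') = x + (-x'.1, -x'.2 - 2 * (∑ j, x.1 j * conj (x'.1 j)).im) := by
  have h1 : (∑ j, x.1 j * conj ((-x'.1) j)) = -∑ j, x.1 j * conj (x'.1 j) := by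
    rw [← Finset.sum_neg_distrib]
    refine Finset.sum_congr rfl fun j _ => ?_
    simp
  simp only [Hmul, Hinv, Prod.ext_iff, Prod.fst_add, Prod.snd_add, h1]
  refine ⟨trivial, ?_⟩
  simp; ring

lemma intermediate_eq {n : ℕ} (x x' : H n) (s : ℝ) :
    x + s • (Hmul x (Hinv x') - x) = Hmul x (Hinv ((s • x'.1, s * x'.2) : H n)) := by
  rw [hmul_sub x x', hmul_sub x ((s • x'.1, s * x'.2) : H n)]
  have h1 : (∑ j, x.1 j * conj ((s • x'.1) j)) = s • ∑ j, x.1 j * conj (x'.1 j) := by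
    rw [Finset.smul_sum]
    refine Finset.sum_congr rfl fun j _ => ?_
    simp [Pi.smul_apply, smul_eq_mul]
    ring
  rw [add_sub_cancel_left, h1]
  simp only [Prod.ext_iff, Prod.fst_add, Prod.snd_add, Prod.smul_fst, Prod.smul_snd]
  constructor
  · funext j; simp
  · simp [Complex.smul_im]; ring

lemma hmul_inv_cancel {n : ℕ} (x y : H n) : Hmul (Hmul x (Hinv y)) y = x := by
  simp only [Hmul, Hinv, Prod.ext_iff]
  constructor
  · simp
  · have h0 : (∑ j, x.1 j * conj ((-y.1) j)) = -∑ j, x.1 j * conj (y.1 j) := by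
      rw [← Finset.sum_neg_distrib]
      refine Finset.sum_congr rfl fun j _ => ?_
      simp
    have h1 : (∑ j, (x.1 + -y.1) j * conj (y.1 j))
        = (∑ j, x.1 j * conj (y.1 j)) - ∑ j, (y.1 j * conj (y.1 j)) := by
      rw [← Finset.sum_sub_distrib]
      refine Finset.sum_congr rfl fun j _ => ?_
      simp; ring
    have h2 : (∑ j, (y.1 j * conj (y.1 j))).im = 0 := by
      rw [Complex.im_sum]
      refine Finset.sum_eq_zero fun j _ => ?_
      simp [Complex.mul_conj]
    simp only [h0, h1, Complex.sub_im, Complex.neg_im, h2]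
    ring

-- |Im ∑ x₁ conj x'₁| ≤ Hnorm x * Hnorm x'
lemma im_sum_le {n : ℕ} (x x' : H n) :
    |(∑ j, x.1 j * conj (x'.1 j)).im| ≤ Hnorm x * Hnorm x' := by
  have h1 : |(∑ j, x.1 j * conj (x'.1 j)).im| ≤ ∑ j, ‖x.1 j‖ * ‖x'.1 j‖ := by
    rw [Complex.im_sum]
    refine (Finset.abs_sum_le_sum_abs _ _).trans (Finset.sum_le_sum fun j _ => ?_)
    calc |(x.1 j * conj (x'.1 j)).im| ≤ ‖x.1 j * conj (x'.1 j)‖ :=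
          Complex.abs_im_le_norm _
      _ = ‖x.1 j‖ * ‖x'.1 j‖ := by simp
  refine h1.trans ?_
  have h2 : (∑ j, ‖x.1 j‖ * ‖x'.1 j‖) ^ 2
      ≤ (∑ j, ‖x.1 j‖ ^ 2) * (∑ j, ‖x'.1 j‖ ^ 2) :=
    Finset.sum_mul_sq_le_sq_mul_sq Finset.univ _ _
  have h3 : (∑ j, ‖x.1 j‖ ^ 2) ≤ Hnorm x ^ 2 := by
    rw [Hnorm_sq]
    simp only [Complex.sq_norm]
    exact le_add_of_nonneg_right (abs_nonneg _)
  have h4 : (∑ j, ‖x'.1 j‖ ^ 2) ≤ Hnorm x' ^ 2 := by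
    rw [Hnorm_sq]
    simp only [Complex.sq_norm]
    exact le_add_of_nonneg_right (abs_nonneg _)
  have hs : (∑ j, ‖x.1 j‖ * ‖x'.1 j‖) ≥ 0 :=
    Finset.sum_nonneg fun j _ => by positivity
  have h5 : (∑ j, ‖x.1 j‖ * ‖x'.1 j‖) ^ 2 ≤ (Hnorm x * Hnorm x') ^ 2 := by
    rw [mul_pow]
    refine h2.trans (mul_le_mul h3 h4 ?_ (sq_nonneg _))
    exact Finset.sum_nonneg fun j _ => sq_nonneg _
  exact (pow_le_pow_iff_left₀ hs (mul_nonneg (Hnorm_nonneg x) (Hnorm_nonneg x')) two_ne_zero).mp h5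

lemma abs_fst_le_Hnorm {n : ℕ} (x : H n) (j : Fin n) : ‖x.1 j‖ ≤ Hnorm x := by
  have h1 : ‖x.1 j‖ ^ 2 ≤ Hnorm x ^ 2 := by
    rw [Hnorm_sq, Complex.sq_norm]
    calc Complex.normSq (x.1 j) ≤ ∑ i, Complex.normSq (x.1 i) :=
        Finset.single_le_sum (fun i _ => Complex.normSq_nonneg _) (Finset.mem_univ j)
      _ ≤ _ := le_add_of_nonneg_right (abs_nonneg _)
  exact (pow_le_pow_iff_left₀ (norm_nonneg _) (Hnorm_nonneg x) two_ne_zero).mp h1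

lemma abs_snd_le_Hnorm_sq {n : ℕ} (x : H n) : |x.2| ≤ Hnorm x ^ 2 := by
  rw [Hnorm_sq]
  exact le_add_of_nonneg_left (Finset.sum_nonneg fun j _ => Complex.normSq_nonneg _)

-- ‖a - x‖ ≤ 3 h' (1+Hnorm x) in the regime h' ≤ (1+Hnorm x)
lemma diff_norm_le {n : ℕ} (x x' : H n) (hx' : Hnorm x' ≤ 1 + Hnorm x) :
    ‖Hmul x (Hinv x') - x‖ ≤ 3 * Hnorm x' * (1 + Hnorm x) := by
  have key : Hmul x (Hinv x') - x = (-x'.1, -x'.2 - 2 * (∑ j, x.1 j * conj (x'.1 j)).im) := by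
    rw [hmul_sub]; abel
  rw [key, Prod.norm_def]
  have hA : 0 ≤ 1 + Hnorm x := by nlinarith [Hnorm_nonneg x]
  have h1 : ‖-x'.1‖ ≤ 3 * Hnorm x' * (1 + Hnorm x) := by
    rw [norm_neg]
    refine (pi_norm_le_iff_of_nonneg (by nlinarith [Hnorm_nonneg x', Hnorm_nonneg x])).mpr fun j => ?_
    calc ‖x'.1 j‖ = ‖x'.1 j‖ := rfl
      _ ≤ Hnorm x' := abs_fst_le_Hnorm x' j
      _ = Hnorm x' * 1 := (mul_one _).symm
      _ ≤ 3 * Hnorm x' * (1 + Hnorm x) := by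
          nlinarith [Hnorm_nonneg x', Hnorm_nonneg x]
  have h2 : ‖-x'.2 - 2 * (∑ j, x.1 j * conj (x'.1 j)).im‖ ≤ 3 * Hnorm x' * (1 + Hnorm x) := by
    have him := im_sum_le x x'
    have hs2 := abs_snd_le_Hnorm_sq x'
    have hsq : Hnorm x' ^ 2 ≤ Hnorm x' * (1 + Hnorm x) := by
      nlinarith [Hnorm_nonneg x']
    have habs : ‖-x'.2 - 2 * (∑ j, x.1 j * conj (x'.1 j)).im‖
        ≤ |x'.2| + 2 * |(∑ j, x.1 j * conj (x'.1 j)).im| := by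
      rw [Real.norm_eq_abs]
      calc |(-x'.2) - 2 * (∑ j, x.1 j * conj (x'.1 j)).im|
          ≤ |(-x'.2)| + |2 * (∑ j, x.1 j * conj (x'.1 j)).im| := abs_sub _ _
        _ = |x'.2| + 2 * |(∑ j, x.1 j * conj (x'.1 j)).im| := by
            rw [abs_neg, abs_mul]; norm_num
    refine habs.trans ?_
    nlinarith [Hnorm_nonneg x, Hnorm_nonneg x']
  exact max_le h1 h2

lemma Hnorm_le_ambient {n : ℕ} (q : H n) : Hnorm q ≤ Real.sqrt (n + 1) * (1 + ‖q‖) := by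
  have hq0 : (0:ℝ) ≤ ‖q‖ := norm_nonneg _
  have h1 : ∀ j, Complex.normSq (q.1 j) ≤ ‖q‖ ^ 2 := by
    intro j
    have h : ‖q.1 j‖ ≤ ‖q‖ := (norm_le_pi_norm q.1 j).trans (norm_fst_le q)
    have : Complex.normSq (q.1 j) = ‖q.1 j‖ ^ 2 := by
      exact (Complex.sq_norm _).symm
    rw [this]
    nlinarith [norm_nonneg (q.1 j)]
  have h2 : |q.2| ≤ ‖q‖ := by
    calc |q.2| = ‖q.2‖ := rfl
      _ ≤ ‖q‖ := norm_snd_le q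
  have h3 : (∑ j, Complex.normSq (q.1 j)) + |q.2| ≤ (n + 1) * (1 + ‖q‖) ^ 2 := by
    have hsum : (∑ j, Complex.normSq (q.1 j)) ≤ n * ‖q‖ ^ 2 := by
      calc (∑ j, Complex.normSq (q.1 j)) ≤ ∑ _j : Fin n, ‖q‖ ^ 2 :=
          Finset.sum_le_sum fun j _ => h1 j
        _ = n * ‖q‖ ^ 2 := by simp
    nlinarith [Nat.cast_nonneg (α := ℝ) n]
  calc Hnorm q ≤ Real.sqrt ((n + 1) * (1 + ‖q‖) ^ 2) := Real.sqrt_le_sqrt h3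
    _ = Real.sqrt (n + 1) * (1 + ‖q‖) := by
        rw [Real.sqrt_mul (by positivity), Real.sqrt_sq (by positivity)]

lemma Hnorm_scaled_le {n : ℕ} (x' : H n) (s : ℝ) (hs0 : 0 ≤ s) (hs1 : s ≤ 1) :
    Hnorm ((s • x'.1, s * x'.2) : H n) ≤ Hnorm x' := by
  unfold Hnorm
  apply Real.sqrt_le_sqrt
  have h1 : ∀ j, Complex.normSq ((s • x'.1) j) = s ^ 2 * Complex.normSq (x'.1 j) := by
    intro j
    have : (s • x'.1) j = (s : ℂ) * x'.1 j := by
      simp [Pi.smul_apply, Complex.real_smul]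
    rw [this, Complex.normSq_mul, Complex.normSq_ofReal, sq]
  refine add_le_add ?_ ?_
  · rw [Finset.sum_congr rfl fun j _ => h1 j, ← Finset.mul_sum]
    have h2 := Finset.sum_nonneg (fun j (_ : j ∈ Finset.univ) => Complex.normSq_nonneg (x'.1 j))
    have hs2 : s ^ 2 ≤ 1 := by nlinarith
    exact mul_le_of_le_one_left h2 hs2
  · rw [abs_mul]
    have hs2 : |s| ≤ 1 := abs_le.mpr ⟨by linarith, hs1⟩
    exact mul_le_of_le_one_left (abs_nonneg _) hs2

lemma lower_bound_aux {n : ℕ} (γ : ℝ) (hγ : 1 < γ)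
    (hγ' : ∀ x y : H n, Hnorm (Hmul x y) ≤ γ * (Hnorm x + Hnorm y))
    (x y : H n) (hy : 2 * γ * Hnorm y ≤ 1 + Hnorm x) :
    1 + Hnorm x ≤ 2 * γ * (1 + Hnorm (Hmul x (Hinv y))) := by
  have h1 : Hnorm x ≤ γ * (Hnorm (Hmul x (Hinv y)) + Hnorm y) := by
    conv_lhs => rw [← hmul_inv_cancel x y]
    exact hγ' _ _
  nlinarith [Hnorm_nonneg (Hmul x (Hinv y)), Hnorm_nonneg y, Hnorm_nonneg x]

end helperLemmas

set_option maxHeartbeats 1000000 in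
/-- double-difference estimate for a Schwartz function on ℍⁿ × ℝ,
in the regime |(z',u')| ≤ (1/(2γ))(1+|(z,u)|), |r'| ≤ (1/2)(1+|r|). -/
theorem statement4 (n : ℕ) (F : SchwartzMap (H n × ℝ) ℝ) (L : ℕ) (hL : 0 < L)
    (γ : ℝ) (hγ : 1 < γ)
    (hγ' : ∀ x y : H n, Hnorm (Hmul x y) ≤ γ * (Hnorm x + Hnorm y)) :
    ∃ C > 0, ∀ (x x' : H n) (r r' : ℝ),
      Hnorm x' ≤ 1 / (2 * γ) * (1 + Hnorm x) → |r'| ≤ 1 / 2 * (1 + |r|) →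
      |F (Hmul x (Hinv x'), r - r') - F (x, r - r') - F (Hmul x (Hinv x'), r) + F (x, r)|
        ≤ C * Hnorm x' / (1 + Hnorm x) ^ (L + 2 * n + 2) * (|r'| / (1 + |r|) ^ (L + 1)) := by
  classical
  have hγ0 : (0:ℝ) < γ := lt_trans one_pos hγ
  set c₁ : ℝ := 2 * γ * (1 + Real.sqrt (n + 1)) with hc₁def
  have hc₁pos : 0 < c₁ := by
    have := Real.sqrt_nonneg ((n:ℝ) + 1); positivity
  set B : ℝ := 2 ^ (L + 2 * n + 3 + (L + 1)) *
    ((Finset.Iic ((L + 2 * n + 3 + (L + 1), 2) : ℕ × ℕ)).sup fun m => SchwartzMap.seminorm ℝ m.1 m.2) F with hBdef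
  have hB0 : 0 ≤ B := by
    have h0 : 0 ≤ ((Finset.Iic ((L + 2 * n + 3 + (L + 1), 2) : ℕ × ℕ)).sup
        (fun m => SchwartzMap.seminorm ℝ m.1 m.2) : Seminorm ℝ (SchwartzMap (H n × ℝ) ℝ)) F :=
      apply_nonneg _ F
    positivity
  refine ⟨3 * (B + 1) * c₁ ^ (L + 2 * n + 3) * 2 ^ (L + 1), by positivity, ?_⟩
  intro x x' r r' hx' hr'
  set a : H n := Hmul x (Hinv x') with hadef
  set A : ℝ := 1 + Hnorm x with hAdef
  set R : ℝ := 1 + |r| with hRdef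
  have hA1 : 1 ≤ A := by have := Hnorm_nonneg x; simp only [hAdef]; linarith
  have hR1 : 1 ≤ R := by have := abs_nonneg r; simp only [hRdef]; linarith
  have hA0 : 0 < A := lt_of_lt_of_le one_pos hA1
  have hR0 : 0 < R := lt_of_lt_of_le one_pos hR1
  have hx'A : Hnorm x' ≤ 1 + Hnorm x := by
    have h2γ : 1 / (2 * γ) ≤ 1 := by
      rw [div_le_one (by linarith)]; linarith
    calc Hnorm x' ≤ 1 / (2 * γ) * A := hx'
      _ ≤ 1 * A := by nlinarith
      _ = A := one_mul A
  have hx'2γ : 2 * γ * Hnorm x' ≤ A := by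
    have h := hx'
    rw [div_mul_eq_mul_div, one_mul, le_div_iff₀ (by linarith)] at h
    linarith [h]
  -- smoothness facts
  have hF : ContDiff ℝ (⊤:ℕ∞) (F : H n × ℝ → ℝ) := F.smooth ⊤
  have hF1 : ContDiff ℝ (⊤:ℕ∞) (fderiv ℝ (F : H n × ℝ → ℝ)) := hF.fderiv_right (by simp)
  set e : H n × ℝ := (((0 : Fin n → ℂ), (0:ℝ)), (1:ℝ)) with hedef
  have hnorme : ‖e‖ = 1 := by
    simp [hedef, Prod.norm_def]
  set Φ : H n × ℝ → ℝ := fun p => (fderiv ℝ (F : H n × ℝ → ℝ) p) e with hΦdef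
  -- derivative in t
  have hFc : ∀ (c : H n) (t : ℝ),
      HasDerivAt (fun t : ℝ => F ((c, r - t * r') : H n × ℝ)) (-r' * Φ (c, r - t * r')) t := by
    intro c t
    have h2 : HasDerivAt (fun t : ℝ => r - t * r') (-r') t := by
      simpa using ((hasDerivAt_id t).mul_const r').const_sub r
    have hpath : HasDerivAt (fun t : ℝ => ((c, r - t * r') : H n × ℝ)) (((0 : H n), -r')) t :=
      (hasDerivAt_const t c).prodMk h2
    have h := ((hF.differentiable (by simp)) _).hasFDerivAt.comp_hasDerivAt t hpath
    have heq : (fderiv ℝ (F : H n × ℝ → ℝ) ((c, r - t * r') : H n × ℝ)) (((0 : H n), -r'))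
        = -r' * Φ (c, r - t * r') := by
      have hvec : (((0 : H n), -r') : H n × ℝ) = (-r') • e := by
        simp [hedef, Prod.ext_iff]
      rw [hvec, ContinuousLinearMap.map_smul, smul_eq_mul]
    rwa [heq] at h
  set u : ℝ → ℝ := fun t => F ((a, r - t * r') : H n × ℝ) - F ((x, r - t * r') : H n × ℝ)
    with hudef
  have hu : ∀ t, HasDerivAt u (-r' * Φ (a, r - t * r') - -r' * Φ (x, r - t * r')) t :=
    fun t => (hFc a t).sub (hFc x t)
  obtain ⟨τ, hτmem, hτ⟩ := exists_hasDerivAt_eq_slope u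
    (fun t => -r' * Φ (a, r - t * r') - -r' * Φ (x, r - t * r')) zero_lt_one
    (fun t _ => (hu t).continuousAt.continuousWithinAt) (fun t ht => hu t)
  set ρ : ℝ := r - τ * r' with hρdef
  have hτval : u 1 - u 0 = -r' * Φ (a, ρ) - -r' * Φ (x, ρ) := by
    rw [hτ]; simp
  -- second MVT
  set v : H n × ℝ := (((a - x : H n), (0:ℝ)) : H n × ℝ) with hvdef
  set w : ℝ → ℝ := fun s => Φ (((x + s • (a - x) : H n), ρ) : H n × ℝ) with hwdef
  have hw : ∀ s, HasDerivAt w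
      ((fderiv ℝ (fderiv ℝ (F : H n × ℝ → ℝ)) (((x + s • (a - x) : H n), ρ) : H n × ℝ) v) e) s := by
    intro s
    have h1 : HasDerivAt (fun s : ℝ => (x + s • (a - x) : H n)) (a - x) s := by
      simpa using ((hasDerivAt_id s).smul_const (a - x)).const_add x
    have hpath : HasDerivAt (fun s : ℝ => (((x + s • (a - x) : H n), ρ) : H n × ℝ))
        v s := by
      rw [hvdef]; exact h1.prodMk (hasDerivAt_const s ρ)
    have hΦ : HasFDerivAt Φ
        ((ContinuousLinearMap.apply ℝ ℝ e).comp
          (fderiv ℝ (fderiv ℝ (F : H n × ℝ → ℝ)) (((x + s • (a - x) : H n), ρ) : H n × ℝ)))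
        (((x + s • (a - x) : H n), ρ) : H n × ℝ) :=
      (ContinuousLinearMap.apply ℝ ℝ e).hasFDerivAt.comp _
        ((hF1.differentiable (by simp)) _).hasFDerivAt
    have h := hΦ.comp_hasDerivAt s hpath
    simp at h; exact h
  obtain ⟨σ, hσmem, hσ⟩ := exists_hasDerivAt_eq_slope w
    (fun s => (fderiv ℝ (fderiv ℝ (F : H n × ℝ → ℝ))
      (((x + s • (a - x) : H n), ρ) : H n × ℝ) v) e) zero_lt_one
    (fun s _ => (hw s).continuousAt.continuousWithinAt) (fun s hs => hw s)
  have hw1 : w 1 = Φ ((a, ρ) : H n × ℝ) := by simp [hwdef]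
  have hw0 : w 0 = Φ ((x, ρ) : H n × ℝ) := by simp [hwdef]
  set q : H n := x + σ • (a - x) with hqdef
  set p : H n × ℝ := ((q, ρ) : H n × ℝ) with hpdef
  have hσval : Φ ((a, ρ) : H n × ℝ) - Φ ((x, ρ) : H n × ℝ)
      = (fderiv ℝ (fderiv ℝ (F : H n × ℝ → ℝ)) p v) e := by
    rw [← hw1, ← hw0]
    rw [hσ]; simp
  -- rewrite the LHS
  have hLHS : F ((a, r - r') : H n × ℝ) - F ((x, r - r') : H n × ℝ)
      - F ((a, r) : H n × ℝ) + F ((x, r) : H n × ℝ) = u 1 - u 0 := by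
    simp only [hudef, one_mul, zero_mul, sub_zero]
    ring
  -- quantitative bounds
  set T := iteratedFDeriv ℝ 2 (F : H n × ℝ → ℝ) p with hTdef
  have hTnn : (0:ℝ) ≤ ‖T‖ := norm_nonneg _
  have hx'nn : (0:ℝ) ≤ Hnorm x' := Hnorm_nonneg x'
  have hDle : |(fderiv ℝ (fderiv ℝ (F : H n × ℝ → ℝ)) p v) e| ≤ ‖T‖ * ‖v‖ := by
    have h1 : T ![v, e] = (fderiv ℝ (fderiv ℝ (F : H n × ℝ → ℝ)) p v) e := by
      rw [hTdef, iteratedFDeriv_two_apply]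
      simp
    rw [← h1, ← Real.norm_eq_abs]
    calc ‖T ![v, e]‖ ≤ ‖T‖ * (‖v‖ * ‖e‖) := by
          simpa [Fin.prod_univ_two] using T.le_opNorm ![v, e]
      _ = ‖T‖ * ‖v‖ := by rw [hnorme, mul_one]
  have hvle : ‖v‖ ≤ 3 * Hnorm x' * A := by
    have h1 : ‖v‖ = ‖(a - x : H n)‖ := by
      rw [hvdef, Prod.norm_def]; simp
    rw [h1, hadef]
    exact diff_norm_le x x' hx'A
  have hD2 : |(fderiv ℝ (fderiv ℝ (F : H n × ℝ → ℝ)) p v) e| ≤ ‖T‖ * (3 * Hnorm x' * A) :=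
    hDle.trans (mul_le_mul_of_nonneg_left hvle hTnn)
  have hdecay : (1 + ‖p‖) ^ (L + 2 * n + 3 + (L + 1)) * ‖T‖ ≤ B := by
    rw [hTdef, hBdef]
    exact one_add_le_sup_seminorm_apply (𝕜 := ℝ)
      (m := ((L + 2 * n + 3 + (L + 1), 2) : ℕ × ℕ)) le_rfl le_rfl F p
  -- lower bounds on ‖p‖
  have hq_eq : q = Hmul x (Hinv ((σ • x'.1, σ * x'.2) : H n)) := by
    rw [hqdef, hadef]; exact intermediate_eq x x' σ
  clear_value T p q v e w u Φ a ρ B A R c₁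
  have hσ0 : (0:ℝ) ≤ σ := le_of_lt hσmem.1
  have hσ1 : σ ≤ 1 := le_of_lt hσmem.2
  have hqnn : (0:ℝ) ≤ ‖q‖ := norm_nonneg q
  have hpnn : (0:ℝ) ≤ ‖p‖ := norm_nonneg p
  have hq_le_p : ‖q‖ ≤ ‖p‖ := by rw [hpdef]; exact norm_fst_le (⟨q, ρ⟩ : H n × ℝ)
  have hρ_le_p : |ρ| ≤ ‖p‖ := by rw [hpdef]; exact norm_snd_le (⟨q, ρ⟩ : H n × ℝ)
  have hA_le : A ≤ c₁ * (1 + ‖p‖) := by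
    rw [hAdef, hc₁def]
    have h1 : Hnorm ((σ • x'.1, σ * x'.2) : H n) ≤ Hnorm x' := Hnorm_scaled_le x' σ hσ0 hσ1
    have h2 : 2 * γ * Hnorm ((σ • x'.1, σ * x'.2) : H n) ≤ 1 + Hnorm x :=
      le_trans (mul_le_mul_of_nonneg_left h1 (by linarith : (0:ℝ) ≤ 2 * γ)) (by rw [hAdef] at hx'2γ; exact hx'2γ)
    have h3 := lower_bound_aux γ hγ hγ' x _ h2
    rw [← hq_eq] at h3
    have h4 : Hnorm q ≤ Real.sqrt (n+1) * (1 + ‖q‖) := Hnorm_le_ambient q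
    have hs := Real.sqrt_nonneg ((n:ℝ)+1)
    calc 1 + Hnorm x ≤ 2 * γ * (1 + Hnorm q) := h3
      _ ≤ 2 * γ * (1 + Real.sqrt (n+1) * (1 + ‖q‖)) := by
          exact mul_le_mul_of_nonneg_left (by linarith) (by linarith : (0:ℝ) ≤ 2 * γ)
      _ ≤ 2 * γ * (1 + Real.sqrt (n+1)) * (1 + ‖p‖) := by
          have hkey : 1 + Real.sqrt (n+1) * (1 + ‖q‖)
              ≤ (1 + Real.sqrt (n+1)) * (1 + ‖q‖) := by
            have h6 : (1 + Real.sqrt (n+1)) * (1 + ‖q‖)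
                = 1 + Real.sqrt (n+1) * (1 + ‖q‖) + ‖q‖ := by ring
            linarith
          have h7 := mul_le_mul_of_nonneg_left hkey (by linarith : (0:ℝ) ≤ 2 * γ)
          have h8 : (0:ℝ) ≤ 2 * γ * (1 + Real.sqrt (n+1)) :=
            mul_nonneg (by linarith) (by linarith)
          calc 2 * γ * (1 + Real.sqrt (n+1) * (1 + ‖q‖))
              ≤ 2 * γ * ((1 + Real.sqrt (n+1)) * (1 + ‖q‖)) := h7
            _ = 2 * γ * (1 + Real.sqrt (n+1)) * (1 + ‖q‖) := by ring
            _ ≤ 2 * γ * (1 + Real.sqrt (n+1)) * (1 + ‖p‖) :=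
                mul_le_mul_of_nonneg_left (by linarith) h8
  have hR_le : R ≤ 2 * (1 + ‖p‖) := by
    rw [hRdef]
    have h1 : |r| - |ρ| ≤ |r - ρ| := abs_sub_abs_le_abs_sub r ρ
    have h2 : r - ρ = τ * r' := by rw [hρdef]; ring
    have hτ1 : |τ| ≤ 1 := abs_le.mpr ⟨by linarith [hτmem.1], le_of_lt hτmem.2⟩
    have h3 : |τ * r'| ≤ |r'| := by
      rw [abs_mul]; exact mul_le_of_le_one_left (abs_nonneg _) hτ1
    have h4 : |r| ≤ |ρ| + |r'| := by rw [h2] at h1; linarith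
    rw [hRdef] at hr'
    linarith [hρ_le_p]
  -- assemble power bounds
  have e1 : A ^ (L + 2 * n + 3) ≤ c₁ ^ (L + 2 * n + 3) * (1 + ‖p‖) ^ (L + 2 * n + 3) := by
    rw [← mul_pow]
    exact pow_le_pow_left₀ (le_of_lt hA0) hA_le _
  have e2 : R ^ (L + 1) ≤ 2 ^ (L + 1) * (1 + ‖p‖) ^ (L + 1) := by
    rw [← mul_pow]
    exact pow_le_pow_left₀ (le_of_lt hR0) hR_le _
  have e3 : A ^ (L + 2 * n + 3) * R ^ (L + 1)
      ≤ c₁ ^ (L + 2 * n + 3) * 2 ^ (L + 1) * (1 + ‖p‖) ^ (L + 2 * n + 3 + (L + 1)) := by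
    calc A ^ (L + 2 * n + 3) * R ^ (L + 1)
        ≤ (c₁ ^ (L + 2 * n + 3) * (1 + ‖p‖) ^ (L + 2 * n + 3))
          * (2 ^ (L + 1) * (1 + ‖p‖) ^ (L + 1)) := by
          apply mul_le_mul e1 e2 (by positivity) (by positivity)
      _ = c₁ ^ (L + 2 * n + 3) * 2 ^ (L + 1) * (1 + ‖p‖) ^ (L + 2 * n + 3 + (L + 1)) := by
          rw [pow_add]; ring
  have hTbound : ‖T‖ * (A ^ (L + 2 * n + 3) * R ^ (L + 1))
      ≤ B * (c₁ ^ (L + 2 * n + 3) * 2 ^ (L + 1)) := by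
    calc ‖T‖ * (A ^ (L + 2 * n + 3) * R ^ (L + 1))
        ≤ ‖T‖ * (c₁ ^ (L + 2 * n + 3) * 2 ^ (L + 1)
            * (1 + ‖p‖) ^ (L + 2 * n + 3 + (L + 1))) :=
          mul_le_mul_of_nonneg_left e3 hTnn
      _ = (c₁ ^ (L + 2 * n + 3) * 2 ^ (L + 1))
            * ((1 + ‖p‖) ^ (L + 2 * n + 3 + (L + 1)) * ‖T‖) := by ring
      _ ≤ (c₁ ^ (L + 2 * n + 3) * 2 ^ (L + 1)) * B :=
          mul_le_mul_of_nonneg_left hdecay (by positivity)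
      _ = B * (c₁ ^ (L + 2 * n + 3) * 2 ^ (L + 1)) := by ring
  have habs : |u 1 - u 0| = |r'| * |(fderiv ℝ (fderiv ℝ (F : H n × ℝ → ℝ)) p v) e| := by
    rw [hτval, ← hσval]
    have h : -r' * Φ ((a, ρ) : H n × ℝ) - -r' * Φ ((x, ρ) : H n × ℝ)
        = -r' * (Φ ((a, ρ) : H n × ℝ) - Φ ((x, ρ) : H n × ℝ)) := by ring
    rw [h, abs_mul, abs_neg]
  rw [hLHS, habs]
  have hrw : 3 * (B + 1) * c₁ ^ (L + 2 * n + 3) * 2 ^ (L + 1) * Hnorm x'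
      / A ^ (L + 2 * n + 2) * (|r'| / R ^ (L + 1))
      = 3 * (B + 1) * c₁ ^ (L + 2 * n + 3) * 2 ^ (L + 1) * Hnorm x' * |r'|
        / (A ^ (L + 2 * n + 2) * R ^ (L + 1)) := by
    field_simp
  rw [hrw, le_div_iff₀ (by positivity)]
  calc |r'| * |(fderiv ℝ (fderiv ℝ (F : H n × ℝ → ℝ)) p v) e|
        * (A ^ (L + 2 * n + 2) * R ^ (L + 1))
      ≤ |r'| * (‖T‖ * (3 * Hnorm x' * A)) * (A ^ (L + 2 * n + 2) * R ^ (L + 1)) := by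
        apply mul_le_mul_of_nonneg_right _ (by positivity)
        exact mul_le_mul_of_nonneg_left hD2 (abs_nonneg r')
    _ = (3 * Hnorm x' * |r'|) * (‖T‖ * (A ^ (L + 2 * n + 3) * R ^ (L + 1))) := by
        ring
    _ ≤ (3 * Hnorm x' * |r'|) * (B * (c₁ ^ (L + 2 * n + 3) * 2 ^ (L + 1))) := by
        apply mul_le_mul_of_nonneg_left hTbound (by positivity)
    _ = B * (3 * Hnorm x' * |r'| * (c₁ ^ (L + 2 * n + 3) * 2 ^ (L + 1))) := by ring
    _ ≤ (B + 1) * (3 * Hnorm x' * |r'| * (c₁ ^ (L + 2 * n + 3) * 2 ^ (L + 1))) := by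
        apply mul_le_mul_of_nonneg_right (by linarith) (by positivity)
    _ = 3 * (B + 1) * c₁ ^ (L + 2 * n + 3) * 2 ^ (L + 1) * Hnorm x' * |r'| := by ring
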